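/- Let (k₊, k₋) be the kneading invariants of the rational rotation T_{1,p/q} (with gcd(p,q)=1), written k₊ = (v₁…v_q)^∞ and k₋ = (u₁…u_q)^∞. Then k₊ and k₋ lie on the same periodic orbit of the shift — there exists an integer s ≤ q−1 with σ^s(k₊) = k₋ — and moreover v₁v₂ = 10, u₁u₂ = 01, and v_i = u_i for all 3 ≤ i ≤ q. -/

import Mathlib

/-- Left shift on binary sequences. -/
def shift (x : ℕ → Bool) : ℕ → Bool := fun n => x (n + 1)

/-- Strict lexicographic order on binary sequences (false < true). -/
def lexLt (x y : ℕ → Bool) : Prop := ∃ n, (∀ i < n, x i = y i) ∧ x n < y n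

/-- Lexicographic order on binary sequences. -/
def lexLe (x y : ℕ → Bool) : Prop := lexLt x y ∨ x = y

/-- A sequence is periodic. -/
def IsPeriodicSeq (b : ℕ → Bool) : Prop := ∃ p, 0 < p ∧ ∀ n, b (n + p) = b n

/-- The periodic sequence `(b|_k)^∞` repeating the first `k` symbols of `b`. -/
def periodize (k : ℕ) (b : ℕ → Bool) : ℕ → Bool := fun n => b (n % k)

open Classical in
/-- The metric `d(ω,ν) = 2^{-|ω∧ν|+1}` where `|ω∧ν|` is the (1-based) first index of
disagreement; with 0-based sequences this index is `sInf {n | x n ≠ y n} + 1`. -/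
noncomputable def distFun (x y : ℕ → Bool) : ℝ :=
  if x = y then 0 else 2 ^ (-((sInf {n | x n ≠ y n} : ℕ) + 1 : ℤ) + 1)

/-- Right-continuous version of the rotation `T_{1,α}`. -/
noncomputable def rotPlus (α : ℝ) : ℝ → ℝ := fun x => Int.fract (x + α)

/-- Left-continuous version of the rotation `T_{1,α}`. -/
noncomputable def rotMinus (α : ℝ) : ℝ → ℝ := fun x =>
  if Int.fract (x + α) = 0 then 1 else Int.fract (x + α)

/-- Upper kneading sequence `k₊ = τ(c+)` of the critical point `c = 1 − α`:
the `i`-th symbol is `1` iff the right-limit orbit of `c` is `≥ c` at time `i`. -/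
noncomputable def kPlus (α : ℝ) : ℕ → Bool := fun i =>
  decide (1 - α ≤ (rotPlus α)^[i] (1 - α))

/-- Lower kneading sequence `k₋ = τ(c−)`:
the `i`-th symbol is `1` iff the left-limit orbit of `c` is `> c` at time `i`. -/
noncomputable def kMinus (α : ℝ) : ℕ → Bool := fun i =>
  decide (1 - α < (rotMinus α)^[i] (1 - α))

lemma fract_fract_add (x y : ℝ) : Int.fract (Int.fract x + y) = Int.fract (x + y) := by
  have h : Int.fract x + y = x + y - (⌊x⌋ : ℝ) := by rw [Int.fract]; ring
  rw [h, Int.fract_sub_intCast]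

lemma emod_eq_of_rep {q a r : ℤ} (h : q ∣ a - r) (h0 : 0 ≤ r) (h1 : r < q) : a % q = r := by
  obtain ⟨k, hk⟩ := h
  rw [show a = r + q * k by linarith, Int.add_mul_emod_self_left, Int.emod_eq_of_lt h0 h1]

lemma orbitPlus (α : ℝ) (h0 : 0 < α) (h1 : α < 1) (i : ℕ) :
    (rotPlus α)^[i] (1 - α) = Int.fract (((i : ℝ) - 1) * α) := by
  induction i with
  | zero =>
    have hf : ⌊-α⌋ = -1 := by
      rw [Int.floor_eq_iff]; constructor <;> push_cast <;> linarith
    simp only [Function.iterate_zero, id]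
    rw [Nat.cast_zero, zero_sub, neg_one_mul, Int.fract, hf]
    push_cast; ring
  | succ i ih =>
    rw [Function.iterate_succ_apply', ih]
    unfold rotPlus
    rw [fract_fract_add]
    congr 1; push_cast; ring

lemma orbitMinus (α : ℝ) (h0 : 0 < α) (h1 : α < 1) (i : ℕ) (hi : 1 ≤ i) :
    (rotMinus α)^[i] (1 - α) =
      if Int.fract (((i : ℝ) - 1) * α) = 0 then 1 else Int.fract (((i : ℝ) - 1) * α) := by
  have hα : Int.fract α = α := Int.fract_eq_self.mpr ⟨le_of_lt h0, h1⟩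
  induction i with
  | zero => omega
  | succ i ih =>
    have hcast : Int.fract ((((i : ℝ)) - 1) * α + α) = Int.fract ((((i + 1 : ℕ) : ℝ) - 1) * α) := by
      congr 1; push_cast; ring
    rcases Nat.eq_zero_or_pos i with rfl | hi'
    · rw [zero_add, Function.iterate_one]
      unfold rotMinus
      rw [show (1 : ℝ) - α + α = 1 by ring, show (((0 + 1 : ℕ) : ℝ) - 1) * α = 0 by push_cast; ring]
      simp [Int.fract_one, Int.fract_zero]
    · rw [Function.iterate_succ_apply', ih hi']
      unfold rotMinus
      by_cases hc : Int.fract (((i : ℝ) - 1) * α) = 0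
      · rw [if_pos hc]
        have h2 : Int.fract ((1 : ℝ) + α) = α := by
          rw [show (1 : ℝ) + α = ((1 : ℤ) : ℝ) + α by norm_num, Int.fract_intCast_add, hα]
        have h3 : Int.fract ((((i + 1 : ℕ) : ℝ) - 1) * α) = α := by
          rw [← hcast, ← fract_fract_add, hc, zero_add, hα]
        rw [h2, h3, if_neg (ne_of_gt h0)]
      · rw [if_neg hc, fract_fract_add, hcast]

section formulas
variable {p q : ℕ}

lemma ineq_le (hq : 0 < q) (hpq : p < q) (M : ℤ) :
    (1 - (p : ℝ) / q ≤ (M : ℝ) / q) ↔ ((q : ℤ) - p ≤ M) := by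
  have hq' : (0 : ℝ) < q := by exact_mod_cast hq
  rw [show (1 : ℝ) - (p : ℝ) / q = (((q : ℤ) - p : ℤ) : ℝ) / q by push_cast; field_simp,
    div_le_div_iff_of_pos_right hq', Int.cast_le]

lemma ineq_lt (hq : 0 < q) (hpq : p < q) (M : ℤ) :
    (1 - (p : ℝ) / q < (M : ℝ) / q) ↔ ((q : ℤ) - p < M) := by
  have hq' : (0 : ℝ) < q := by exact_mod_cast hq
  rw [show (1 : ℝ) - (p : ℝ) / q = (((q : ℤ) - p : ℤ) : ℝ) / q by push_cast; field_simp,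
    div_lt_div_iff_of_pos_right hq', Int.cast_lt]

lemma fract_formula (hq : 0 < q) (i : ℕ) :
    Int.fract (((i : ℝ) - 1) * ((p : ℝ) / q)) = ((((i : ℤ) - 1) * p % q : ℤ) : ℝ) / q := by
  rw [show ((i : ℝ) - 1) * ((p : ℝ) / q) = ((((i : ℤ) - 1) * p : ℤ) : ℝ) / q by push_cast; ring,
    Int.fract_div_intCast_eq_div_intCast_mod]

lemma kPlus_eq (hp : 0 < p) (hpq : p < q) (i : ℕ) :
    kPlus ((p : ℝ) / q) i = decide ((q : ℤ) - p ≤ ((i : ℤ) - 1) * p % q) := by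
  have hq : 0 < q := lt_trans hp hpq
  have hq' : (0 : ℝ) < q := by exact_mod_cast hq
  have hα0 : (0 : ℝ) < (p : ℝ) / q := by positivity
  have hα1 : (p : ℝ) / q < 1 := by
    rw [div_lt_one hq']; exact_mod_cast hpq
  unfold kPlus
  rw [orbitPlus _ hα0 hα1, fract_formula hq, decide_eq_decide]
  exact ineq_le hq hpq _

lemma kMinus_eq (hp : 0 < p) (hpq : p < q) (i : ℕ) :
    kMinus ((p : ℝ) / q) i = decide ((q : ℤ) - p ≤ (((i : ℤ) - 1) * p - 1) % q) := by
  have hq : 0 < q := lt_trans hp hpq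
  have hq' : (0 : ℝ) < q := by exact_mod_cast hq
  have hqz : (0 : ℤ) < q := by exact_mod_cast hq
  have hα0 : (0 : ℝ) < (p : ℝ) / q := by positivity
  have hα1 : (p : ℝ) / q < 1 := by
    rw [div_lt_one hq']; exact_mod_cast hpq
  rcases Nat.eq_zero_or_pos i with rfl | hi
  · have hm : (((0 : ℤ) - 1) * p - 1) % q = q - p - 1 :=
      emod_eq_of_rep ⟨-1, by ring⟩ (by omega) (by omega)
    unfold kMinus
    simp only [Function.iterate_zero, id, Nat.cast_zero, hm]
    refine decide_eq_decide.mpr ?_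
    constructor
    · intro h; linarith
    · intro h; omega
  · unfold kMinus
    rw [orbitMinus _ hα0 hα1 i hi, fract_formula hq]
    set M : ℤ := ((i : ℤ) - 1) * p with hM
    have hmod0 : 0 ≤ M % q := Int.emod_nonneg _ (by omega)
    have hmodq : M % q < q := Int.emod_lt_of_pos _ hqz
    have hrep : (q : ℤ) ∣ M - M % q := by
      refine ⟨M / q, ?_⟩
      have := Int.mul_ediv_add_emod M q
      linarith
    by_cases hc : M % q = 0
    · have hm1 : (M - 1) % q = q - 1 := by
        refine emod_eq_of_rep ?_ (by omega) (by omega)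
        obtain ⟨k, hk⟩ := hrep
        exact ⟨k - 1, by rw [hc] at hk; push_cast; linarith [hk]⟩
      rw [if_pos (by rw [hc]; norm_num), hm1, decide_eq_decide]
      constructor
      · intro _; omega
      · intro _; linarith
    · have hm1 : (M - 1) % q = M % q - 1 := by
        refine emod_eq_of_rep ?_ (by omega) (by omega)
        obtain ⟨k, hk⟩ := hrep
        exact ⟨k, by linarith⟩
      have hne : ((M % q : ℤ) : ℝ) / q ≠ 0 := by
        apply div_ne_zero _ (ne_of_gt hq')
        exact_mod_cast (by omega : M % q ≠ 0)
      rw [if_neg hne, hm1, decide_eq_decide, ineq_lt hq hpq]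
      omega

end formulas

lemma shift_iterate (s : ℕ) (x : ℕ → Bool) (n : ℕ) : shift^[s] x n = x (n + s) := by
  induction s generalizing x n with
  | zero => rfl
  | succ s ih =>
    rw [Function.iterate_succ_apply, ih]
    show x (n + s + 1) = x (n + (s + 1))
    rw [Nat.add_assoc]

/-- for the rational rotation `T_{1,p/q}` (in lowest terms), the kneading
invariants `k₊ = (v₁…v_q)^∞`, `k₋ = (u₁…u_q)^∞` are `q`-periodic, lie on the same periodic
orbit of the shift (`σ^s(k₊) = k₋` for some `s ≤ q−1`), and satisfy `v₁v₂ = 10`, `u₁u₂ = 01`,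
`v_i = u_i` for all `3 ≤ i ≤ q` (0-indexed: indices `2 ≤ i ≤ q−1`). -/
theorem stmt_11 (p q : ℕ) (hcop : Nat.Coprime p q) (hp : 0 < p) (hpq : p < q) :
    (∀ i : ℕ, kPlus ((p : ℝ) / q) (i + q) = kPlus ((p : ℝ) / q) i) ∧
    (∀ i : ℕ, kMinus ((p : ℝ) / q) (i + q) = kMinus ((p : ℝ) / q) i) ∧
    (∃ s : ℕ, s ≤ q - 1 ∧ shift^[s] (kPlus ((p : ℝ) / q)) = kMinus ((p : ℝ) / q)) ∧
    kPlus ((p : ℝ) / q) 0 = true ∧ kPlus ((p : ℝ) / q) 1 = false ∧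
    kMinus ((p : ℝ) / q) 0 = false ∧ kMinus ((p : ℝ) / q) 1 = true ∧
    (∀ i : ℕ, 2 ≤ i → i ≤ q - 1 → kPlus ((p : ℝ) / q) i = kMinus ((p : ℝ) / q) i) := by
  have hq : 0 < q := lt_trans hp hpq
  haveI : NeZero q := ⟨by omega⟩
  have hqz : (0 : ℤ) < q := by exact_mod_cast hq
  refine ⟨?_, ?_, ?_, ?_, ?_, ?_, ?_, ?_⟩
  · intro i
    rw [kPlus_eq hp hpq, kPlus_eq hp hpq, decide_eq_decide]
    rw [show (((i + q : ℕ) : ℤ) - 1) * p = ((i : ℤ) - 1) * p + q * p by push_cast; ring,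
      Int.add_mul_emod_self_left]
  · intro i
    rw [kMinus_eq hp hpq, kMinus_eq hp hpq, decide_eq_decide]
    rw [show (((i + q : ℕ) : ℤ) - 1) * p - 1 = (((i : ℤ) - 1) * p - 1) + q * p by push_cast; ring,
      Int.add_mul_emod_self_left]
  · set s : ℕ := (-(p : ZMod q)⁻¹).val with hs
    have hsq : s < q := ZMod.val_lt _
    have hunit : IsUnit (p : ZMod q) := (ZMod.isUnit_iff_coprime p q).mpr hcop
    have hcastS : ((s : ℕ) : ZMod q) = -(p : ZMod q)⁻¹ := by
      rw [hs, ZMod.natCast_val, ZMod.cast_id]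
    have hzero : (((s : ℤ) * p + 1 : ℤ) : ZMod q) = 0 := by
      push_cast
      rw [hcastS, neg_mul, ZMod.inv_mul_of_unit _ hunit]
      ring
    have hdvd : (q : ℤ) ∣ ((s : ℤ) * p + 1) :=
      (ZMod.intCast_zmod_eq_zero_iff_dvd _ q).mp hzero
    refine ⟨s, by omega, ?_⟩
    funext n
    rw [shift_iterate, kPlus_eq hp hpq, kMinus_eq hp hpq, decide_eq_decide]
    have key : (q : ℤ) ∣ ((((n : ℤ) - 1) * p - 1) - ((((n + s : ℕ) : ℤ)) - 1) * p) := by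
      rw [show ((((n : ℤ) - 1) * p - 1) - ((((n + s : ℕ) : ℤ)) - 1) * p)
          = -((s : ℤ) * p + 1) by push_cast; ring]
      exact dvd_neg.mpr hdvd
    have hmod : ((((n + s : ℕ) : ℤ)) - 1) * p % q = (((n : ℤ) - 1) * p - 1) % q :=
      Int.modEq_iff_dvd.mpr key
    rw [hmod]
  · rw [kPlus_eq hp hpq,
      show (((0 : ℕ) : ℤ) - 1) * p % q = (q : ℤ) - p from
        emod_eq_of_rep ⟨-1, by push_cast; ring⟩ (by omega) (by omega)]
    simp
  · rw [kPlus_eq hp hpq, show (((1 : ℕ) : ℤ) - 1) * p = 0 by push_cast; ring, Int.zero_emod]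
    simp
    omega
  · rw [kMinus_eq hp hpq,
      show ((((0 : ℕ) : ℤ) - 1) * p - 1) % q = (q : ℤ) - p - 1 from
        emod_eq_of_rep ⟨-1, by push_cast; ring⟩ (by omega) (by omega)]
    simp
  · rw [kMinus_eq hp hpq,
      show ((((1 : ℕ) : ℤ) - 1) * p - 1) % q = (q : ℤ) - 1 from
        emod_eq_of_rep ⟨-1, by push_cast; ring⟩ (by omega) (by omega)]
    simp
    omega
  · intro i h2i hiq
    have hcop' : IsCoprime (q : ℤ) (p : ℤ) := Nat.isCoprime_iff_coprime.mpr hcop.symm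
    rw [kPlus_eq hp hpq, kMinus_eq hp hpq, decide_eq_decide]
    set M : ℤ := ((i : ℤ) - 1) * p with hM
    have hmod0 : 0 ≤ M % q := Int.emod_nonneg _ (by omega)
    have hmodq : M % q < q := Int.emod_lt_of_pos _ hqz
    have hrep : (q : ℤ) ∣ M - M % q :=
      ⟨M / q, by have := Int.mul_ediv_add_emod M q; linarith⟩
    have hne0 : M % q ≠ 0 := by
      intro h
      have hd : (q : ℤ) ∣ M := by rw [h, sub_zero] at hrep; exact hrep
      have hd2 : (q : ℤ) ∣ ((i : ℤ) - 1) := hcop'.dvd_of_dvd_mul_right (hM ▸ hd)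
      have := Int.le_of_dvd (by omega) hd2
      omega
    have hneqp : M % q ≠ (q : ℤ) - p := by
      intro h
      have h2 : (q : ℤ) ∣ M - ((q : ℤ) - p) := by rw [← h]; exact hrep
      obtain ⟨k, hk⟩ := h2
      have hd : (q : ℤ) ∣ (i : ℤ) * p :=
        ⟨k + 1, by rw [hM] at hk; linear_combination hk⟩
      have hd2 : (q : ℤ) ∣ (i : ℤ) := hcop'.dvd_of_dvd_mul_right hd
      have := Int.le_of_dvd (by omega) hd2
      omega
    have hm1 : (M - 1) % q = M % q - 1 := by
      refine emod_eq_of_rep ?_ (by omega) (by omega)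
      obtain ⟨k, hk⟩ := hrep
      exact ⟨k, by linarith⟩
    rw [hm1]
    generalize M % q = r at hmod0 hmodq hne0 hneqp ⊢
    omega
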